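/- Let G be a group and H a subgroup of G. Then H is characteristic in G if and only if there exist a multiplicative morphism property W on Grp containing every isomorphism of Grp, a functor U : WideSubcategory W ⥤ WideSubcategory W, and a natural transformation ε : 𝟭 (WideSubcategory W) ⟶ U, such that H equals the kernel of the underlying group homomorphism of the component ε.app G. -/

import Mathlib

open CategoryTheory

namespace CharWide

variable (G : GrpCat) (H : Subgroup G)

def K (A : GrpCat) : Subgroup A := ⨆ e : (G : Type _) ≃* A, H.map e.toMonoidHom

lemma map_K_le {A B : GrpCat} (e : (A : Type _) ≃* B) :
    (K G H A).map e.toMonoidHom ≤ K G H B := by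
  rw [K, Subgroup.map_iSup]
  refine iSup_le fun φ => ?_
  rw [Subgroup.map_map]
  exact le_iSup_of_le (φ.trans e) le_rfl

instance K_normal (A : GrpCat) : (K G H A).Normal := by
  constructor
  intro x hx g
  have := map_K_le G H (MulAut.conj g : (A : Type _) ≃* A)
  have hm : ((MulAut.conj g : (A : Type _) ≃* A) x) ∈ K G H A :=
    this (Subgroup.mem_map.mpr ⟨x, hx, rfl⟩)
  simpa [MulAut.conj_apply] using hm

lemma K_G [h : H.Characteristic] : K G H G = H := by
  refine le_antisymm (iSup_le fun e => le_of_eq ?_) (le_iSup_of_le (MulEquiv.refl G) ?_)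
  · exact Subgroup.characteristic_iff_map_eq.mp h e
  · exact fun x hx => ⟨x, hx, rfl⟩

def Q (A : GrpCat) : GrpCat := GrpCat.of ((A : Type _) ⧸ K G H A)

def qm (A : GrpCat) : A ⟶ Q G H A := GrpCat.ofHom (QuotientGroup.mk' (K G H A))

/-- f preserves K -/
def Pres : MorphismProperty GrpCat := fun A B f => (K G H A).map f.hom ≤ K G H B

lemma Pres_comap {A B : GrpCat} {f : A ⟶ B} (h : Pres G H f) :
    K G H A ≤ (K G H B).comap f.hom :=
  Subgroup.map_le_iff_le_comap.mp h

/-- induced map on quotients -/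
def ind {A B : GrpCat} (f : A ⟶ B) (h : Pres G H f) : Q G H A ⟶ Q G H B :=
  GrpCat.ofHom (QuotientGroup.map _ _ f.hom (Pres_comap G H h))

lemma qm_ind {A B : GrpCat} (f : A ⟶ B) (h : Pres G H f) :
    qm G H A ≫ ind G H f h = f ≫ qm G H B := by
  ext x
  rfl

inductive Wgen : ∀ ⦃A B : GrpCat⦄, (A ⟶ B) → Prop
  | iso : ∀ {A B : GrpCat} (f : A ⟶ B), IsIso f → Wgen f
  | quot : ∀ (A : GrpCat), Wgen (qm G H A)
  | comp : ∀ {A B C : GrpCat} (f : A ⟶ B) (g : B ⟶ C), Wgen f → Wgen g → Wgen (f ≫ g)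

def W : MorphismProperty GrpCat := fun _ _ f => Wgen G H f

instance : (W G H).IsMultiplicative where
  id_mem X := Wgen.iso _ inferInstance
  comp_mem f g hf hg := Wgen.comp f g hf hg

lemma W_pres ⦃A B : GrpCat⦄ (f : A ⟶ B) (h : W G H f) : Pres G H f := by
  induction h with
  | iso f hf =>
      have := map_K_le G H ((asIso f).groupIsoToMulEquiv)
      exact this
  | quot A =>
      intro x hx
      obtain ⟨y, hy, rfl⟩ := hx
      have : (qm G H A).hom y = 1 := (QuotientGroup.eq_one_iff y).mpr hy
      rw [this]
      exact one_mem _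
  | comp f g hf hg ihf ihg =>
      intro x hx
      obtain ⟨y, hy, rfl⟩ := hx
      exact ihg ⟨_, ihf ⟨y, hy, rfl⟩, rfl⟩


lemma ind_id (A : GrpCat) (h : Pres G H (𝟙 A)) : ind G H (𝟙 A) h = 𝟙 (Q G H A) := by
  ext x
  refine QuotientGroup.induction_on x fun a => rfl

lemma ind_comp {A B C : GrpCat} (f : A ⟶ B) (g : B ⟶ C) (hf : Pres G H f) (hg : Pres G H g)
    (hfg : Pres G H (f ≫ g)) : ind G H (f ≫ g) hfg = ind G H f hf ≫ ind G H g hg := by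
  ext x
  refine QuotientGroup.induction_on x fun a => rfl

lemma ind_qm (A : GrpCat) (h : Pres G H (qm G H A)) :
    ind G H (qm G H A) h = qm G H (Q G H A) := by
  ext x
  refine QuotientGroup.induction_on x fun a => rfl

lemma Wgen_ind ⦃A B : GrpCat⦄ (f : A ⟶ B) (h : W G H f) :
    W G H (ind G H f (W_pres G H f h)) := by
  induction h with
  | iso f hf =>
      refine Wgen.iso _ ?_
      have hinv : W G H (inv f) := Wgen.iso _ inferInstance
      refine ⟨ind G H (inv f) (W_pres G H _ hinv), ?_, ?_⟩
      · rw [← ind_comp G H f (inv f) _ _ (by rw [IsIso.hom_inv_id]; exact W_pres G H _ (Wgen.iso _ inferInstance))]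
        simp only [IsIso.hom_inv_id]
        exact ind_id G H _ _
      · rw [← ind_comp G H (inv f) f _ _ (by rw [IsIso.inv_hom_id]; exact W_pres G H _ (Wgen.iso _ inferInstance))]
        simp only [IsIso.inv_hom_id]
        exact ind_id G H _ _
  | quot A =>
      rw [ind_qm]
      exact Wgen.quot _
  | comp f g hf hg ihf ihg =>
      rw [ind_comp G H f g (W_pres G H f hf) (W_pres G H g hg)]
      exact Wgen.comp _ _ ihf ihg

def U : WideSubcategory (W G H) ⥤ WideSubcategory (W G H) where
  obj X := ⟨Q G H X.obj⟩
  map f := ⟨ind G H f.1 (W_pres G H f.1 f.2), Wgen_ind G H f.1 f.2⟩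
  map_id X := by
    apply WideSubcategory.hom_ext
    exact ind_id G H X.obj (W_pres G H _ (Wgen.iso _ inferInstance))
  map_comp f g := by
    apply WideSubcategory.hom_ext
    exact ind_comp G H f.1 g.1 (W_pres G H _ f.2) (W_pres G H _ g.2)
      (W_pres G H _ (Wgen.comp _ _ f.2 g.2))

def ε : 𝟭 (WideSubcategory (W G H)) ⟶ U G H where
  app X := by exact ⟨qm G H X.obj, Wgen.quot _⟩
  naturality X Y f := by
    apply WideSubcategory.hom_ext
    exact (qm_ind G H f.1 (W_pres G H f.1 f.2)).symm

end CharWide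

theorem characteristic_iff_wideSubcategory_unit (G : GrpCat) (H : Subgroup G) :
    H.Characteristic ↔
      ∃ (W : MorphismProperty GrpCat) (hW : W.IsMultiplicative),
        MorphismProperty.isomorphisms GrpCat ≤ W ∧
        (haveI := hW
          ∃ (U : WideSubcategory W ⥤ WideSubcategory W)
            (ε : 𝟭 (WideSubcategory W) ⟶ U),
              H = MonoidHom.ker (ε.app (WideSubcategory.mk G)).1.hom) := by
  constructor
  · intro hchar
    haveI := hchar
    refine ⟨CharWide.W G H, inferInstance, fun A B f hf => CharWide.Wgen.iso f hf,
      CharWide.U G H, CharWide.ε G H, ?_⟩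
    have h1 : MonoidHom.ker ((CharWide.ε G H).app (WideSubcategory.mk G)).1.hom
        = CharWide.K G H G := QuotientGroup.ker_mk' _
    rw [h1, CharWide.K_G]
  · rintro ⟨W, hW, hiso, U, ε, hker⟩
    haveI := hW
    constructor
    intro φ
    let i : G ≅ G := MulEquiv.toGrpIso φ
    let m : WideSubcategory.mk G ⟶ WideSubcategory.mk G := ⟨i.hom, hiso _ (inferInstanceAs (IsIso i.hom))⟩
    haveI : IsIso m := by
      refine ⟨⟨⟨i.inv, hiso _ (inferInstanceAs (IsIso i.inv))⟩, ?_, ?_⟩⟩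
      · exact WideSubcategory.hom_ext (h := i.hom_inv_id)
      · exact WideSubcategory.hom_ext (h := i.inv_hom_id)
    have hnat := ε.naturality m
    have hcomp : (m ≫ ε.app (WideSubcategory.mk G)).1
        = (ε.app (WideSubcategory.mk G) ≫ U.map m).1 := by
      rw [← hnat]; rfl
    haveI : IsIso ((wideSubcategoryInclusion W).map (U.map m)) := inferInstance
    have hinj : Function.Injective (U.map m).1.hom := by
      have := (asIso ((wideSubcategoryInclusion W).map (U.map m))).groupIsoToMulEquiv.injective
      exact this
    rw [hker]
    ext x
    simp only [Subgroup.mem_comap, MonoidHom.mem_ker]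
    have hx : ∀ y : (G : Type _),
        (ε.app (WideSubcategory.mk G)).1.hom (φ.toMonoidHom y)
        = (U.map m).1.hom ((ε.app (WideSubcategory.mk G)).1.hom y) := by
      intro y
      have h2 := congrArg (fun f => f.hom y) hcomp
      simpa [m, i] using h2
    show (ε.app (WideSubcategory.mk G)).1.hom (φ.toMonoidHom x) = 1
        ↔ (ε.app (WideSubcategory.mk G)).1.hom x = 1
    rw [hx]
    constructor
    · intro h
      refine hinj ?_
      rw [map_one]
      exact h
    · intro h
      rw [h, map_one]
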